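/- Let k ≥ 1 and let X₁, …, X_k be independent {0,1}-valued random variables with P(X_i = 1) > 1/2 for every i. Let V = X₁ + ⋯ + X_k. Then P(V > k/2) + (1/2)·P(V = k/2) > 1/2. That is, a majority vote among k independent binary votes, each individually correct with probability strictly exceeding 1/2, and with ties broken by a fair coin, is correct with probability strictly exceeding 1/2. -/

import Mathlib

open MeasureTheory ProbabilityTheory

lemma aux_prod_add_prod_le {ι : Type*} {s : Finset ι} (hs : s.Nonempty) (a b c : ι → ℝ)
    (hb : ∀ i ∈ s, 0 ≤ b i) (hc : ∀ i ∈ s, 0 ≤ c i)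
    (h : ∀ i ∈ s, b i + c i ≤ a i) :
    (∏ i ∈ s, b i) + (∏ i ∈ s, c i) ≤ ∏ i ∈ s, a i := by
  induction hs using Finset.Nonempty.cons_induction with
  | singleton j => simpa using h j (Finset.mem_singleton_self j)
  | cons j s hj hs ih =>
    have hmem : ∀ i ∈ s, i ∈ Finset.cons j s hj := fun i hi => Finset.mem_cons_of_mem hi
    have hjmem : j ∈ Finset.cons j s hj := Finset.mem_cons_self j s
    have hbj := hb j hjmem
    have hcj := hc j hjmem
    have hbs : 0 ≤ ∏ i ∈ s, b i := Finset.prod_nonneg fun i hi => hb i (hmem i hi)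
    have hcs : 0 ≤ ∏ i ∈ s, c i := Finset.prod_nonneg fun i hi => hc i (hmem i hi)
    have ih' := ih (fun i hi => hb i (hmem i hi)) (fun i hi => hc i (hmem i hi))
      (fun i hi => h i (hmem i hi))
    simp only [Finset.prod_cons]
    have haj : 0 ≤ a j := le_trans (by linarith) (h j hjmem)
    calc b j * ∏ i ∈ s, b i + c j * ∏ i ∈ s, c i
        ≤ (b j + c j) * ((∏ i ∈ s, b i) + ∏ i ∈ s, c i) := by nlinarith
      _ ≤ a j * ∏ i ∈ s, a i :=
          mul_le_mul (h j hjmem) ih' (by linarith) haj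

section
variable {Ω : Type*} [MeasurableSpace Ω] {μ : Measure Ω} [IsProbabilityMeasure μ]
  {k : ℕ} {X : Fin k → Ω → ℕ}

omit [IsProbabilityMeasure μ] in
lemma aux_split (hmeas : ∀ i, Measurable (X i))
    (hval : ∀ i ω, X i ω = 0 ∨ X i ω = 1)
    (hind : iIndepFun (m := fun _ => inferInstance) X μ)
    {s : Finset (Fin k)} {j : Fin k} (hj : j ∉ s) (A : Set ℕ) :
    μ {ω | (X j ω + ∑ i ∈ s, X i ω) ∈ A}
      = μ {ω | X j ω = 1} * μ {ω | (1 + ∑ i ∈ s, X i ω) ∈ A}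
        + μ {ω | X j ω = 0} * μ {ω | (∑ i ∈ s, X i ω) ∈ A} := by
  have hSind : IndepFun (∑ i ∈ s, X i) (X j) μ :=
    hind.indepFun_finsetSum_of_notMem hmeas hj
  have hsum : ∀ ω, (∑ i ∈ s, X i) ω = ∑ i ∈ s, X i ω := fun ω => Finset.sum_apply ω s X
  have hset : {ω | (X j ω + ∑ i ∈ s, X i ω) ∈ A}
      = ((∑ i ∈ s, X i) ⁻¹' {n | (1 + n) ∈ A} ∩ X j ⁻¹' {1})
        ∪ ((∑ i ∈ s, X i) ⁻¹' A ∩ X j ⁻¹' {0}) := by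
    ext ω
    rcases hval j ω with h | h <;>
      simp [Set.mem_preimage, Set.mem_setOf_eq, hsum, h]
  rw [hset, measure_union, hSind.measure_inter_preimage_eq_mul _ _ .of_discrete .of_discrete,
    hSind.measure_inter_preimage_eq_mul _ _ .of_discrete .of_discrete]
  · have e1 : (∑ i ∈ s, X i) ⁻¹' {n | (1 + n) ∈ A} = {ω | (1 + ∑ i ∈ s, X i ω) ∈ A} := by
      ext ω; simp [hsum]
    have e2 : (∑ i ∈ s, X i) ⁻¹' A = {ω | (∑ i ∈ s, X i ω) ∈ A} := by ext ω; simp [hsum]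
    have e3 : X j ⁻¹' {1} = {ω | X j ω = 1} := rfl
    have e4 : X j ⁻¹' {0} = {ω | X j ω = 0} := rfl
    rw [e1, e2, e3, e4]; ring
  · rw [Set.disjoint_left]
    rintro ω ⟨-, h1⟩ ⟨-, h0⟩
    simp only [Set.mem_preimage, Set.mem_singleton_iff] at h1 h0
    omega
  · have hS : Measurable (∑ i ∈ s, X i) := by
      have : (∑ i ∈ s, X i) = fun ω => ∑ i ∈ s, X i ω := by
        funext ω; exact Finset.sum_apply ω s X
      rw [this]; exact Finset.measurable_sum s fun i _ => hmeas i
    exact (hS .of_discrete).inter ((hmeas j) .of_discrete)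

omit [IsProbabilityMeasure μ] in
lemma aux_inter_ones (hind : iIndepFun (m := fun _ => inferInstance) X μ)
    (s : Finset (Fin k)) :
    μ (⋂ i ∈ s, {ω | X i ω = 1}) = ∏ i ∈ s, μ {ω | X i ω = 1} := by
  have := hind.measure_inter_preimage_eq_mul s (sets := fun _ => ({1} : Set ℕ))
    (fun i _ => .of_discrete)
  simpa [Set.preimage, Set.mem_singleton_iff] using this

omit [IsProbabilityMeasure μ] in
lemma aux_inter_zeros (hind : iIndepFun (m := fun _ => inferInstance) X μ)
    (s : Finset (Fin k)) :
    μ (⋂ i ∈ s, {ω | X i ω = 0}) = ∏ i ∈ s, μ {ω | X i ω = 0} := by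
  have := hind.measure_inter_preimage_eq_mul s (sets := fun _ => ({0} : Set ℕ))
    (fun i _ => .of_discrete)
  simpa [Set.preimage, Set.mem_singleton_iff] using this

omit [IsProbabilityMeasure μ] in
lemma aux_allones (hind : iIndepFun (m := fun _ => inferInstance) X μ)
    (s : Finset (Fin k)) :
    ∏ i ∈ s, μ {ω | X i ω = 1} ≤ μ {ω | s.card ≤ ∑ i ∈ s, X i ω} := by
  rw [← aux_inter_ones hind s]
  apply measure_mono
  intro ω hω
  simp only [Set.mem_iInter, Set.mem_setOf_eq] at hω ⊢
  calc (s.card : ℕ) = ∑ _i ∈ s, 1 := by simp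
    _ ≤ ∑ i ∈ s, X i ω := Finset.sum_le_sum fun i hi => (hω i hi).ge

omit [IsProbabilityMeasure μ] in
lemma aux_zeros (hind : iIndepFun (m := fun _ => inferInstance) X μ)
    (s : Finset (Fin k)) :
    μ {ω | ∑ i ∈ s, X i ω ≤ 0} ≤ ∏ i ∈ s, μ {ω | X i ω = 0} := by
  rw [← aux_inter_zeros hind s]
  apply measure_mono
  intro ω hω
  simp only [Set.mem_setOf_eq] at hω
  simp only [Set.mem_iInter, Set.mem_setOf_eq]
  intro i hi
  exact (Finset.sum_eq_zero_iff.mp (Nat.le_zero.mp hω)) i hi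

omit [IsProbabilityMeasure μ] in
lemma aux_compl (hval : ∀ i ω, X i ω = 0 ∨ X i ω = 1) (j : Fin k) :
    {ω | X j ω = 0} = {ω | X j ω = 1}ᶜ := by
  ext ω; rcases hval j ω with h | h <;> simp [h]

lemma aux_key (p : Fin k → ℝ) (hpdef : ∀ i, p i = (μ {ω | X i ω = 1}).toReal)
    (hmeas : ∀ i, Measurable (X i))
    (hval : ∀ i ω, X i ω = 0 ∨ X i ω = 1)
    (hind : iIndepFun (m := fun _ => inferInstance) X μ)
    (hp : ∀ i, (1 / 2 : ENNReal) < μ {ω | X i ω = 1})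
    (s : Finset (Fin k)) :
    ∀ t : ℕ, 1 ≤ t → t ≤ s.card →
      (μ {ω | ∑ i ∈ s, X i ω ≤ s.card - t}).toReal + ∏ i ∈ s, (2 * p i - 1)
      ≤ (μ {ω | t ≤ ∑ i ∈ s, X i ω}).toReal := by
  have hp_half : ∀ i, (1/2 : ℝ) < p i := by
    intro i
    rw [hpdef i]
    have h := hp i
    have hne : μ {ω | X i ω = 1} ≠ ⊤ := measure_ne_top μ _
    have := (ENNReal.toReal_lt_toReal (by norm_num) hne).mpr h
    simpa using this
  have hp_one : ∀ i, p i ≤ 1 := by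
    intro i
    rw [hpdef i]
    have : μ {ω | X i ω = 1} ≤ 1 := prob_le_one
    simpa using ENNReal.toReal_mono (by norm_num) this
  have hmeas1 : ∀ j : Fin k, MeasurableSet {ω | X j ω = 1} := fun j =>
    (hmeas j) (MeasurableSet.of_discrete (s := {1}))
  have hzero : ∀ j, (μ {ω | X j ω = 0}).toReal = 1 - p j := by
    intro j
    rw [aux_compl hval j, prob_compl_eq_one_sub (hmeas1 j),
      ENNReal.toReal_sub_of_le prob_le_one (by norm_num), hpdef j]
    simp
  -- real-valued split lemma
  have split : ∀ {s : Finset (Fin k)} {j : Fin k}, j ∉ s → ∀ A : Set ℕ,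
      (μ {ω | (X j ω + ∑ i ∈ s, X i ω) ∈ A}).toReal
        = p j * (μ {ω | (1 + ∑ i ∈ s, X i ω) ∈ A}).toReal
          + (1 - p j) * (μ {ω | (∑ i ∈ s, X i ω) ∈ A}).toReal := by
    intro s j hj A
    rw [aux_split hmeas hval hind hj A, ENNReal.toReal_add (by finiteness) (by finiteness),
      ENNReal.toReal_mul, ENNReal.toReal_mul, hzero j, hpdef j]
  -- real-valued versions of allones and zeros
  have hallones : ∀ s : Finset (Fin k),
      ∏ i ∈ s, p i ≤ (μ {ω | s.card ≤ ∑ i ∈ s, X i ω}).toReal := by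
    intro s
    have h := ENNReal.toReal_mono (measure_ne_top μ _) (aux_allones hind s)
    rw [ENNReal.toReal_prod] at h
    refine le_trans (le_of_eq ?_) h
    exact Finset.prod_congr rfl fun i _ => hpdef i
  have hzeros : ∀ s : Finset (Fin k),
      (μ {ω | ∑ i ∈ s, X i ω ≤ 0}).toReal ≤ ∏ i ∈ s, (1 - p i) := by
    intro s
    have hne : (∏ i ∈ s, μ {ω | X i ω = 0}) ≠ ⊤ :=
      ENNReal.prod_ne_top fun i _ => measure_ne_top μ _
    have h := ENNReal.toReal_mono hne (aux_zeros hind s)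
    rw [ENNReal.toReal_prod] at h
    refine h.trans (le_of_eq ?_)
    exact Finset.prod_congr rfl fun i _ => hzero i
  have Pmono : ∀ {A B : Set Ω}, A ⊆ B → (μ A).toReal ≤ (μ B).toReal :=
    fun hAB => ENNReal.toReal_mono (measure_ne_top μ _) (measure_mono hAB)
  induction s using Finset.cons_induction with
  | empty => intro t ht1 ht2; simp at ht2; omega
  | cons j s hj ih =>
    intro t ht1 ht2
    rw [Finset.card_cons] at ht2 ⊢
    set n := s.card with hn
    have hsum_cons : ∀ ω, ∑ i ∈ Finset.cons j s hj, X i ω = X j ω + ∑ i ∈ s, X i ω :=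
      fun ω => Finset.sum_cons hj
    rw [Finset.prod_cons]
    have hg0 : 0 ≤ ∏ i ∈ s, (2 * p i - 1) :=
      Finset.prod_nonneg fun i _ => by have := hp_half i; linarith
    have hgp : ∏ i ∈ s, (2 * p i - 1) ≤ ∏ i ∈ s, p i :=
      Finset.prod_le_prod (fun i _ => by have := hp_half i; linarith)
        (fun i _ => by have := hp_one i; linarith)
    have hSle : ∀ ω, ∑ i ∈ s, X i ω ≤ n := by
      intro ω
      calc ∑ i ∈ s, X i ω ≤ ∑ _i ∈ s, 1 :=
            Finset.sum_le_sum fun i hi => by rcases hval i ω with h | h <;> simp [h]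
        _ = n := by simp [hn]
    have hpj1 := hp_half j
    have hpj2 := hp_one j
    rcases eq_or_lt_of_le ht2 with hteq | htlt
    · -- t = n + 1
      subst hteq
      simp only [Nat.sub_self]
      have h1 := hzeros (Finset.cons j s hj)
      have h2 : ∏ i ∈ Finset.cons j s hj, p i
          ≤ (μ {ω | n + 1 ≤ ∑ i ∈ Finset.cons j s hj, X i ω}).toReal := by
        have h := hallones (Finset.cons j s hj)
        rwa [Finset.card_cons] at h
      have h3 : (∏ i ∈ Finset.cons j s hj, (1 - p i))
            + ∏ i ∈ Finset.cons j s hj, (2 * p i - 1)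
          ≤ ∏ i ∈ Finset.cons j s hj, p i := by
        apply aux_prod_add_prod_le (Finset.cons_nonempty hj)
        · intro i _; have := hp_one i; linarith
        · intro i _; have := hp_half i; linarith
        · intro i _; linarith
      rw [Finset.prod_cons (f := fun i => 2 * p i - 1)] at h3
      linarith
    · -- t ≤ n
      have htn : t ≤ n := by omega
      have hE : (μ {ω | t ≤ ∑ i ∈ Finset.cons j s hj, X i ω}).toReal
          = p j * (μ {ω | t - 1 ≤ ∑ i ∈ s, X i ω}).toReal
            + (1 - p j) * (μ {ω | t ≤ ∑ i ∈ s, X i ω}).toReal := by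
        have e0 : {ω | t ≤ ∑ i ∈ Finset.cons j s hj, X i ω}
            = {ω | (X j ω + ∑ i ∈ s, X i ω) ∈ {m | t ≤ m}} := by
          ext ω; simp only [Set.mem_setOf_eq, hsum_cons]
        have eA : {ω | (1 + ∑ i ∈ s, X i ω) ∈ {m | t ≤ m}}
            = {ω | t - 1 ≤ ∑ i ∈ s, X i ω} := by
          ext ω; simp only [Set.mem_setOf_eq]; omega
        rw [e0, split hj, eA]
        rfl
      have hF : (μ {ω | ∑ i ∈ Finset.cons j s hj, X i ω ≤ n + 1 - t}).toReal
          = p j * (μ {ω | ∑ i ∈ s, X i ω ≤ n - t}).toReal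
            + (1 - p j) * (μ {ω | ∑ i ∈ s, X i ω ≤ n - t + 1}).toReal := by
        have e0 : {ω | ∑ i ∈ Finset.cons j s hj, X i ω ≤ n + 1 - t}
            = {ω | (X j ω + ∑ i ∈ s, X i ω) ∈ {m | m ≤ n + 1 - t}} := by
          ext ω; simp only [Set.mem_setOf_eq, hsum_cons]
        have eA : {ω | (1 + ∑ i ∈ s, X i ω) ∈ {m | m ≤ n + 1 - t}}
            = {ω | ∑ i ∈ s, X i ω ≤ n - t} := by
          ext ω; simp only [Set.mem_setOf_eq]; omega
        have eB : {ω | (∑ i ∈ s, X i ω) ∈ {m | m ≤ n + 1 - t}}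
            = {ω | ∑ i ∈ s, X i ω ≤ n - t + 1} := by
          ext ω; simp only [Set.mem_setOf_eq]; omega
        rw [e0, split hj, eA, eB]
      rw [hE, hF]
      have hIHt := ih t ht1 htn
      rcases eq_or_lt_of_le ht1 with ht1eq | ht1lt
      · -- t = 1
        have hn1 : 1 ≤ n := le_trans ht1 htn
        subst ht1eq
        have huniv1 : (μ {ω | 1 - 1 ≤ ∑ i ∈ s, X i ω}).toReal = 1 := by
          have : {ω | 1 - 1 ≤ ∑ i ∈ s, X i ω} = Set.univ :=
            Set.eq_univ_of_forall fun ω => by simp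
          rw [this]; simp
        have huniv2 : (μ {ω | ∑ i ∈ s, X i ω ≤ n - 1 + 1}).toReal = 1 := by
          have : {ω | ∑ i ∈ s, X i ω ≤ n - 1 + 1} = Set.univ :=
            Set.eq_univ_of_forall fun ω => by
              have := hSle ω; simp only [Set.mem_setOf_eq]; omega
          rw [this]; simp
        have hcompl : (μ {ω | n ≤ ∑ i ∈ s, X i ω}).toReal
            = 1 - (μ {ω | ∑ i ∈ s, X i ω ≤ n - 1}).toReal := by
          have hmS : MeasurableSet {ω | ∑ i ∈ s, X i ω ≤ n - 1} :=
            (Finset.measurable_sum s fun i _ => hmeas i)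
              (MeasurableSet.of_discrete (s := {m | m ≤ n - 1}))
          have hceq : {ω | ∑ i ∈ s, X i ω ≤ n - 1}ᶜ = {ω | n ≤ ∑ i ∈ s, X i ω} := by
            ext ω; simp only [Set.mem_compl_iff, Set.mem_setOf_eq]; omega
          rw [← hceq, prob_compl_eq_one_sub hmS,
            ENNReal.toReal_sub_of_le prob_le_one (by norm_num)]
          simp
        have hgn : ∏ i ∈ s, (2 * p i - 1) ≤ (μ {ω | n ≤ ∑ i ∈ s, X i ω}).toReal :=
          le_trans hgp (hallones s)
        rw [huniv1, huniv2]
        nlinarith [hIHt, hgn, hcompl, hg0,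
          ENNReal.toReal_nonneg (a := μ {ω | ∑ i ∈ s, X i ω ≤ n - 1})]
      · -- 2 ≤ t
        have hIHt1 := ih (t - 1) (by omega) (by omega)
        have hrw : n - (t - 1) = n - t + 1 := by omega
        rw [hrw] at hIHt1
        have hmono : (μ {ω | ∑ i ∈ s, X i ω ≤ n - t}).toReal
            ≤ (μ {ω | ∑ i ∈ s, X i ω ≤ n - t + 1}).toReal :=
          Pmono fun ω hω => by simp only [Set.mem_setOf_eq] at *; omega
        nlinarith [hIHt, hIHt1, hmono, hg0,
          ENNReal.toReal_nonneg (a := μ {ω | ∑ i ∈ s, X i ω ≤ n - t}),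
          ENNReal.toReal_nonneg (a := μ {ω | ∑ i ∈ s, X i ω ≤ n - t + 1})]

end

theorem majority_vote_correct
    {Ω : Type*} [MeasurableSpace Ω] (μ : Measure Ω) [IsProbabilityMeasure μ]
    (k : ℕ) (hk : 1 ≤ k) (X : Fin k → Ω → ℕ)
    (hmeas : ∀ i, Measurable (X i))
    (hval : ∀ i ω, X i ω = 0 ∨ X i ω = 1)
    (hind : iIndepFun (m := fun _ => inferInstance) X μ)
    (hp : ∀ i, (1 / 2 : ENNReal) < μ {ω | X i ω = 1}) :
    (1 / 2 : ENNReal)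
      < μ {ω | (k : ℝ) / 2 < ((∑ i, X i ω : ℕ) : ℝ)}
        + (1 / 2) * μ {ω | ((∑ i, X i ω : ℕ) : ℝ) = (k : ℝ) / 2} := by
  classical
  set t₀ : ℕ := k / 2 + 1 with ht₀
  -- identify the two sets with ℕ-level descriptions
  have hA : {ω | (k : ℝ) / 2 < ((∑ i, X i ω : ℕ) : ℝ)} = {ω | t₀ ≤ ∑ i, X i ω} := by
    ext ω
    simp only [Set.mem_setOf_eq]
    rw [div_lt_iff₀ (by norm_num : (0:ℝ) < 2)]
    constructor
    · intro h
      have h' : k < (∑ i, X i ω) * 2 := by exact_mod_cast h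
      omega
    · intro h
      have h' : k < (∑ i, X i ω) * 2 := by omega
      exact_mod_cast h'
  have hB : {ω | ((∑ i, X i ω : ℕ) : ℝ) = (k : ℝ) / 2} = {ω | 2 * (∑ i, X i ω) = k} := by
    ext ω
    simp only [Set.mem_setOf_eq]
    rw [eq_div_iff (by norm_num : (2:ℝ) ≠ 0)]
    constructor
    · intro h
      have h' : (∑ i, X i ω) * 2 = k := by exact_mod_cast h
      omega
    · intro h
      have h' : (∑ i, X i ω) * 2 = k := by omega
      exact_mod_cast h'
  rw [hA, hB]
  have hVmeas : Measurable (fun ω => ∑ i, X i ω) :=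
    Finset.measurable_sum _ fun i _ => hmeas i
  have measA : MeasurableSet {ω | t₀ ≤ ∑ i, X i ω} :=
    hVmeas (MeasurableSet.of_discrete (s := {m | t₀ ≤ m}))
  have measB : MeasurableSet {ω | 2 * (∑ i, X i ω) = k} :=
    hVmeas (MeasurableSet.of_discrete (s := {m | 2 * m = k}))
  -- the key estimate
  have key := aux_key (μ := μ) (X := X) (fun i => (μ {ω | X i ω = 1}).toReal)
    (fun i => rfl) hmeas hval hind hp Finset.univ t₀
    (by omega) (by rw [Finset.card_univ, Fintype.card_fin]; omega)
  simp only [Finset.card_univ, Fintype.card_fin] at key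
  -- positivity of the product
  have hGpos : 0 < ∏ i, (2 * (μ {ω | X i ω = 1}).toReal - 1) := by
    apply Finset.prod_pos
    intro i _
    have h := hp i
    have hne : μ {ω | X i ω = 1} ≠ ⊤ := measure_ne_top μ _
    have := (ENNReal.toReal_lt_toReal (by norm_num) hne).mpr h
    have : (1/2 : ℝ) < (μ {ω | X i ω = 1}).toReal := by simpa using this
    linarith
  -- partition fact
  have hpart : μ {ω | ∑ i, X i ω ≤ k - t₀} + μ {ω | 2 * (∑ i, X i ω) = k}
      = μ ({ω | t₀ ≤ ∑ i, X i ω}ᶜ) := by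
    rw [← measure_union ?hd measB]
    · congr 1
      ext ω
      simp only [Set.mem_union, Set.mem_setOf_eq, Set.mem_compl_iff, not_le]
      omega
    case hd =>
      rw [Set.disjoint_left]
      intro ω h1 h2
      simp only [Set.mem_setOf_eq] at h1 h2
      omega
  have hcompl : μ ({ω | t₀ ≤ ∑ i, X i ω}ᶜ) = 1 - μ {ω | t₀ ≤ ∑ i, X i ω} :=
    prob_compl_eq_one_sub measA
  -- go to reals
  have hsum : (μ {ω | ∑ i, X i ω ≤ k - t₀}).toReal + (μ {ω | 2 * (∑ i, X i ω) = k}).toReal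
      = 1 - (μ {ω | t₀ ≤ ∑ i, X i ω}).toReal := by
    rw [← ENNReal.toReal_add (measure_ne_top μ _) (measure_ne_top μ _), hpart, hcompl,
      ENNReal.toReal_sub_of_le prob_le_one (by norm_num)]
    simp
  have hne2 : (1 / 2 : ENNReal) * μ {ω | 2 * (∑ i, X i ω) = k} ≠ ⊤ :=
    ENNReal.mul_ne_top (by norm_num) (measure_ne_top μ _)
  have hne : μ {ω | t₀ ≤ ∑ i, X i ω} + 1 / 2 * μ {ω | 2 * (∑ i, X i ω) = k} ≠ ⊤ :=
    ENNReal.add_ne_top.mpr ⟨measure_ne_top μ _, hne2⟩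
  refine (ENNReal.toReal_lt_toReal (by norm_num) hne).mp ?_
  rw [ENNReal.toReal_add (measure_ne_top μ _) hne2, ENNReal.toReal_mul]
  have h12 : ((1 : ENNReal) / 2).toReal = (1/2 : ℝ) := by simp
  rw [h12]
  linarith
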